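/- arXiv:1404.2692 — 2 statements merged into one kernel-verified Lean document; each statement's English description precedes it below -/
import Mathlib

section
/- For $0 < p < \infty$, $0 < \lambda < n$, any nonnegative measurable function $\phi$ on $\mathbb{R}^n$, and any $f \in L^{p,\lambda}(\mathbb{R}^n)$, one has $\int_{\mathbb{R}^n} |f(x)|^p \phi(x)\,dx \le \|f\|_{L^{p,\lambda}}^p \int_{\mathbb{R}^n} \phi\,dH^{\lambda}$, where the right-hand integral is the Choquet integral of $\phi$ with respect to Hausdorff content. -/
open MeasureTheory ENNReal Set

noncomputable section

/-- Axis-parallel cube with lower corner `c` and side length `h`. -/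
def Cube (n : ℕ) (c : Fin n → ℝ) (h : ℝ) : Set (Fin n → ℝ) :=
  {x | ∀ i, c i ≤ x i ∧ x i ≤ c i + h}

/-- `λ`-dimensional Hausdorff content, via countable coverings by cubes. -/
def hausdorffContent (n : ℕ) (lam : ℝ) (E : Set (Fin n → ℝ)) : ℝ≥0∞ :=
  ⨅ (c : ℕ → Fin n → ℝ) (h : ℕ → ℝ) (_ : ∀ j, 0 < h j)
    (_ : E ⊆ ⋃ j, Cube n (c j) (h j)), ∑' j, ENNReal.ofReal (h j) ^ lam

/-- Choquet integral of an `ℝ≥0∞`-valued function against the Hausdorff content `H^λ`. -/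
def choquetE (n : ℕ) (lam : ℝ) (φ : (Fin n → ℝ) → ℝ≥0∞) : ℝ≥0∞ :=
  ∫⁻ t in Set.Ioi (0:ℝ), hausdorffContent n lam {y | ENNReal.ofReal t < φ y}

/-- Choquet integral of a real-valued function against the Hausdorff content `H^λ`. -/
def choquet (n : ℕ) (lam : ℝ) (φ : (Fin n → ℝ) → ℝ) : ℝ≥0∞ :=
  ∫⁻ t in Set.Ioi (0:ℝ), hausdorffContent n lam {y | t < φ y}

/-- The Morrey norm `‖f‖_{L^{p,λ}}`. -/
def morreyNorm (n : ℕ) (p lam : ℝ) (f : (Fin n → ℝ) → ℝ) : ℝ≥0∞ :=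
  ⨆ (c : Fin n → ℝ) (h : ℝ) (_ : 0 < h),
    ((∫⁻ x in Cube n c h, ENNReal.ofReal |f x| ^ p) / ENNReal.ofReal h ^ lam) ^ (1/p)

/-- The weighted Morrey norm of an `ℝ≥0∞`-valued function. -/
def morreyNormWE (n : ℕ) (p lam : ℝ) (w : (Fin n → ℝ) → ℝ) (f : (Fin n → ℝ) → ℝ≥0∞) : ℝ≥0∞ :=
  ⨆ (c : Fin n → ℝ) (h : ℝ) (_ : 0 < h),
    ((∫⁻ x in Cube n c h, f x ^ p * ENNReal.ofReal (w x)) / ENNReal.ofReal h ^ lam) ^ (1/p)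

/-- The weighted Morrey norm `‖f‖_{L^{p,λ}(w)}`. -/
def morreyNormW (n : ℕ) (p lam : ℝ) (w f : (Fin n → ℝ) → ℝ) : ℝ≥0∞ :=
  morreyNormWE n p lam w (fun x => ENNReal.ofReal |f x|)

/-- The Hardy–Littlewood maximal operator (over axis-parallel cubes). -/
def maximalFn (n : ℕ) (f : (Fin n → ℝ) → ℝ) (x : Fin n → ℝ) : ℝ≥0∞ :=
  ⨆ (c : Fin n → ℝ) (h : ℝ) (_ : 0 < h) (_ : x ∈ Cube n c h),
    (∫⁻ y in Cube n c h, ENNReal.ofReal |f y|) / ENNReal.ofReal (h ^ n)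

/-- A weight: a nonnegative locally integrable function positive on a set of positive measure. -/
def IsWeight (n : ℕ) (w : (Fin n → ℝ) → ℝ) : Prop :=
  Measurable w ∧ (∀ x, 0 ≤ w x) ∧ LocallyIntegrable w volume ∧ 0 < volume {x | 0 < w x}

/-- Muckenhoupt `A₁` weight with constant `C`. -/
def IsA1 (n : ℕ) (C : ℝ≥0∞) (w : (Fin n → ℝ) → ℝ) : Prop :=
  IsWeight n w ∧ ∀ᵐ x ∂(volume : Measure (Fin n → ℝ)), maximalFn n w x ≤ C * ENNReal.ofReal (w x)

/-- The basis `𝓑_λ`: `A₁` weights with Choquet integral against `H^λ` at most one. -/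
def MorreyBasis (n : ℕ) (lam : ℝ) : Set ((Fin n → ℝ) → ℝ) :=
  {b | (∃ C : ℝ≥0∞, C ≠ ⊤ ∧ IsA1 n C b) ∧ choquet n lam b ≤ 1}

/-- The norm of the space `H^{q,λ}`; note `b^{-q/q'} = b^{-(q-1)}`. -/
def hNorm (n : ℕ) (q lam : ℝ) (g : (Fin n → ℝ) → ℝ) : ℝ≥0∞ :=
  ⨅ (b : (Fin n → ℝ) → ℝ) (_ : b ∈ MorreyBasis n lam),
    (∫⁻ x, ENNReal.ofReal |g x| ^ q * ENNReal.ofReal (b x) ^ (-(q - 1))) ^ (1/q)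
/-- Euclidean norm on `Fin n → ℝ`. -/
def euclidNorm (n : ℕ) (x : Fin n → ℝ) : ℝ := Real.sqrt (∑ i, x i ^ 2)

/-- A `(p,λ)`-atom: supported in a cube `Q` with `‖a‖_{L^p} ≤ l(Q)^{-λ/p'}`. -/
def IsPLAtom (n : ℕ) (p lam : ℝ) (a : (Fin n → ℝ) → ℝ) : Prop :=
  Measurable a ∧ ∃ (c : Fin n → ℝ) (h : ℝ), 0 < h ∧ (∀ x ∉ Cube n c h, a x = 0) ∧
    (∫⁻ x, ENNReal.ofReal |a x| ^ p) ^ (1/p) ≤ ENNReal.ofReal h ^ (-(lam * (p - 1) / p))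

/-- The block space norm `‖f‖_{B^{p,λ}}`. -/
def blockNorm (n : ℕ) (p lam : ℝ) (f : (Fin n → ℝ) → ℝ) : ℝ≥0∞ :=
  ⨅ (cs : ℕ → ℝ) (a : ℕ → (Fin n → ℝ) → ℝ) (_ : ∀ k, IsPLAtom n p lam (a k))
    (_ : ∀ x, HasSum (fun k => cs k * a k x) (f x)),
    ∑' k, ENNReal.ofReal |cs k|

/-- The dyadic cube `2^{-k}(m + [0,1)^n)`. -/
def DCube (n : ℕ) (k : ℤ) (m : Fin n → ℤ) : Set (Fin n → ℝ) :=
  {x | ∀ i, (m i : ℝ) * (2:ℝ) ^ (-k) ≤ x i ∧ x i < ((m i : ℝ) + 1) * (2:ℝ) ^ (-k)}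

/-- The dyadic maximal operator with respect to a measure `μ`. -/
def dyadicMaximal (n : ℕ) (μ : Measure (Fin n → ℝ)) (f : (Fin n → ℝ) → ℝ)
    (x : Fin n → ℝ) : ℝ≥0∞ :=
  ⨆ (k : ℤ) (m : Fin n → ℤ) (_ : x ∈ DCube n k m),
    (∫⁻ y in DCube n k m, ENNReal.ofReal |f y| ∂μ) / μ (DCube n k m)

/-- The `L^p(μ)`-norm (with `p ∈ (0,∞]`) of an `ℝ≥0∞`-valued function. -/
def lpNormE {α : Type*} [MeasurableSpace α] (μ : Measure α) (p : ℝ≥0∞) (g : α → ℝ≥0∞) : ℝ≥0∞ :=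
  if p = ⊤ then essSup g μ else (∫⁻ x, g x ^ p.toReal ∂μ) ^ (1 / p.toReal)

/-- Content normalized on balls: the infimum of `ρ^λ` over balls `{|x| < ρ}` containing `E`. -/
def ballContent (n : ℕ) (lam : ℝ) (E : Set (Fin n → ℝ)) : ℝ≥0∞ :=
  ⨅ (ρ : ℝ) (_ : 0 ≤ ρ) (_ : E ⊆ {x | euclidNorm n x < ρ}), ENNReal.ofReal ρ ^ lam

/-- Choquet integral against the ball-normalized content. -/
def ballChoquet (n : ℕ) (lam : ℝ) (φ : (Fin n → ℝ) → ℝ) : ℝ≥0∞ :=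
  ∫⁻ t in Set.Ioi (0:ℝ), ballContent n lam {y | t < φ y}

/-- The `μ`-average of `g` over a dyadic cube (indexed by a pair `(k,m)`). -/
def dAvg (n : ℕ) (μ : Measure (Fin n → ℝ)) (g : (Fin n → ℝ) → ℝ)
    (Q : ℤ × (Fin n → ℤ)) : ℝ≥0∞ :=
  (∫⁻ y in DCube n Q.1 Q.2, ENNReal.ofReal (g y) ∂μ) / μ (DCube n Q.1 Q.2)

/-- `Q` is a stopping child of `F`: a maximal dyadic cube inside `F` whose `μ`-average of `g`
exceeds twice that of `F`. -/
def IsPChild (n : ℕ) (μ : Measure (Fin n → ℝ)) (g : (Fin n → ℝ) → ℝ)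
    (F Q : ℤ × (Fin n → ℤ)) : Prop :=
  DCube n Q.1 Q.2 ⊆ DCube n F.1 F.2 ∧ 2 * dAvg n μ g F < dAvg n μ g Q ∧
    ∀ Q' : ℤ × (Fin n → ℤ), DCube n Q.1 Q.2 ⊆ DCube n Q'.1 Q'.2 →
      DCube n Q'.1 Q'.2 ⊆ DCube n F.1 F.2 → 2 * dAvg n μ g F < dAvg n μ g Q' →
      DCube n Q'.1 Q'.2 = DCube n Q.1 Q.2

/-- The collection of principal cubes generated from `Q0`. -/
inductive Principal (n : ℕ) (μ : Measure (Fin n → ℝ)) (g : (Fin n → ℝ) → ℝ)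
    (Q0 : ℤ × (Fin n → ℤ)) : ℤ × (Fin n → ℤ) → Prop
  | base : Principal n μ g Q0 Q0
  | child (F Q : ℤ × (Fin n → ℤ)) : Principal n μ g Q0 F → IsPChild n μ g F Q →
      Principal n μ g Q0 Q

/-- The set `E_𝓕(F) = F \ ⋃_{F' ∈ ch_𝓕(F)} F'`. -/
def PrincipalRest (n : ℕ) (μ : Measure (Fin n → ℝ)) (g : (Fin n → ℝ) → ℝ)
    (F : ℤ × (Fin n → ℤ)) : Set (Fin n → ℝ) :=
  DCube n F.1 F.2 \ ⋃ (Q : ℤ × (Fin n → ℤ)) (_ : IsPChild n μ g F Q), DCube n Q.1 Q.2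
-- universal cover lemma
lemma univ_subset_cubes (n : ℕ) :
    (univ : Set (Fin n → ℝ)) ⊆ ⋃ j : ℕ, Cube n (fun _ => -(j+1:ℝ)) (2*(j+1)) := by
  intro x _
  obtain ⟨N, hN⟩ := exists_nat_ge (∑ i, |x i|)
  refine mem_iUnion.2 ⟨N, fun i => ?_⟩
  have h1 : |x i| ≤ (N:ℝ) := le_trans (Finset.single_le_sum (f := fun i => |x i|)
    (fun j _ => abs_nonneg _) (Finset.mem_univ i)) hN
  have h2 := abs_le.1 h1
  refine ⟨?_, ?_⟩
  · show -((N:ℝ)+1) ≤ x i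
    linarith [h2.1]
  · show x i ≤ -((N:ℝ)+1) + 2*((N:ℝ)+1)
    linarith [h2.2]


/-- `∫ |f|^p φ dx ≤ ‖f‖_{L^{p,λ}}^p ∫ φ dH^λ` (Choquet integral). -/
theorem morrey_le_choquet (n : ℕ) (p lam : ℝ) (hp : 0 < p) (hlam : 0 < lam) (hlamn : lam < n)
    (f : (Fin n → ℝ) → ℝ) (hf : Measurable f) (hfM : morreyNorm n p lam f ≠ ⊤)
    (φ : (Fin n → ℝ) → ℝ) (hφm : Measurable φ) (hφ : ∀ x, 0 ≤ φ x) :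
    ∫⁻ x, ENNReal.ofReal |f x| ^ p * ENNReal.ofReal (φ x) ≤
      morreyNorm n p lam f ^ p * choquet n lam φ := by
  set M := morreyNorm n p lam f with hM
  set g : (Fin n → ℝ) → ℝ≥0∞ := fun x => ENNReal.ofReal |f x| ^ p with hg
  have hgm : Measurable g := (ENNReal.measurable_ofReal.comp hf.abs).pow_const p
  have hMp_ne_top : M ^ p ≠ ⊤ := ENNReal.rpow_ne_top_of_nonneg hp.le hfM
  -- cube bound
  have cube_bound : ∀ (c : Fin n → ℝ) (h : ℝ), 0 < h →
      ∫⁻ x in Cube n c h, g x ≤ M ^ p * ENNReal.ofReal h ^ lam := by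
    intro c h hh
    have hle : ((∫⁻ x in Cube n c h, g x) / ENNReal.ofReal h ^ lam) ^ (1/p) ≤ M :=
      le_iSup_of_le c (le_iSup_of_le h (le_iSup_of_le hh le_rfl))
    have hle2 : (∫⁻ x in Cube n c h, g x) / ENNReal.ofReal h ^ lam ≤ M ^ p := by
      have := ENNReal.rpow_le_rpow hle hp.le
      rwa [← ENNReal.rpow_mul, one_div_mul_cancel hp.ne', ENNReal.rpow_one] at this
    have hh0 : ENNReal.ofReal h ^ lam ≠ 0 :=
      (ENNReal.rpow_pos (ENNReal.ofReal_pos.2 hh) ENNReal.ofReal_ne_top).ne' 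
    have hht : ENNReal.ofReal h ^ lam ≠ ⊤ :=
      ENNReal.rpow_ne_top_of_nonneg hlam.le ENNReal.ofReal_ne_top
    rw [ENNReal.div_le_iff hh0 hht] at hle2
    exact hle2
  -- key lemma
  have key : ∀ E : Set (Fin n → ℝ), ∫⁻ x in E, g x ≤ M ^ p * hausdorffContent n lam E := by
    intro E
    have cover_bound : ∀ (c : ℕ → Fin n → ℝ) (h : ℕ → ℝ), (∀ j, 0 < h j) →
        E ⊆ ⋃ j, Cube n (c j) (h j) →
        ∫⁻ x in E, g x ≤ M ^ p * ∑' j, ENNReal.ofReal (h j) ^ lam := by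
      intro c h hpos hcov
      calc ∫⁻ x in E, g x ≤ ∫⁻ x in ⋃ j, Cube n (c j) (h j), g x := lintegral_mono_set hcov
        _ ≤ ∑' j, ∫⁻ x in Cube n (c j) (h j), g x := lintegral_iUnion_le _ _
        _ ≤ ∑' j, M ^ p * ENNReal.ofReal (h j) ^ lam :=
            ENNReal.tsum_le_tsum fun j => cube_bound (c j) (h j) (hpos j)
        _ = M ^ p * ∑' j, ENNReal.ofReal (h j) ^ lam := ENNReal.tsum_mul_left
    by_cases hM0 : M ^ p = 0
    · have : ∫⁻ x in E, g x ≤ ∫⁻ x in (univ : Set (Fin n → ℝ)), g x :=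
        lintegral_mono_set (subset_univ E)
      have h2 := cover_bound (fun j _ => -(j+1:ℝ)) (fun j => 2*(j+1)) (fun j => by positivity)
        ((subset_univ E).trans (univ_subset_cubes n))
      rw [hM0, zero_mul] at h2
      exact le_trans h2 zero_le
    · rw [← ENNReal.div_le_iff' hM0 hMp_ne_top]
      exact le_iInf fun c => le_iInf fun h => le_iInf fun hpos => le_iInf fun hcov =>
        (ENNReal.div_le_iff' hM0 hMp_ne_top).2 (cover_bound c h hpos hcov)
  -- layer cake
  set ν : Measure (Fin n → ℝ) := volume.withDensity g with hν
  have h1 : ∫⁻ x, g x * ENNReal.ofReal (φ x) = ∫⁻ x, ENNReal.ofReal (φ x) ∂ν := by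
    rw [hν, lintegral_withDensity_eq_lintegral_mul _ hgm hφm.ennreal_ofReal]
    rfl
  have h2 : ∫⁻ x, ENNReal.ofReal (φ x) ∂ν = ∫⁻ t in Ioi (0:ℝ), ν {a | t < φ a} :=
    lintegral_eq_lintegral_meas_lt ν (ae_of_all _ hφ) hφm.aemeasurable
  calc ∫⁻ x, g x * ENNReal.ofReal (φ x) = ∫⁻ t in Ioi (0:ℝ), ν {a | t < φ a} := by
        rw [h1, h2]
    _ ≤ ∫⁻ t in Ioi (0:ℝ), M ^ p * hausdorffContent n lam {a | t < φ a} := by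
        refine lintegral_mono fun t => ?_
        rw [hν, withDensity_apply _ (measurableSet_lt measurable_const hφm)]
        exact key _
    _ = M ^ p * choquet n lam φ := lintegral_const_mul' _ _ hMp_ne_top
end
end

section
/- Let $0 < \alpha < n$ and $p > \alpha/n$. There is a constant $C$ depending only on $\alpha$, $n$, $p$ such that for every axis-parallel cube $Q$, the Choquet integral of $(M 1_Q)^p$ with respect to $H^{\alpha}$ satisfies $\int_{\mathbb{R}^n} M[1_Q]^p\,dH^{\alpha} \le C\, l(Q)^{\alpha}$, where $M$ is the Hardy-Littlewood maximal operator. -/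
open MeasureTheory ENNReal Set

noncomputable section

lemma cube_eq_pi (n : ℕ) (c : Fin n → ℝ) (h : ℝ) :
    Cube n c h = Set.pi Set.univ (fun i => Icc (c i) (c i + h)) := by
  ext x; simp [Cube, Set.mem_pi, Pi.le_def, forall_and]

lemma measurableSet_cube (n : ℕ) (c : Fin n → ℝ) (h : ℝ) :
    MeasurableSet (Cube n c h) := by
  rw [cube_eq_pi]; exact MeasurableSet.univ_pi fun i => measurableSet_Icc

lemma volume_cube (n : ℕ) (c : Fin n → ℝ) {h : ℝ} (hh : 0 ≤ h) :
    volume (Cube n c h) = ENNReal.ofReal (h ^ n) := by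
  rw [cube_eq_pi, volume_pi_pi]
  simp [Real.volume_Icc, ENNReal.ofReal_pow hh]

set_option maxHeartbeats 1000000 in
lemma hausdorffContent_le_cube {n : ℕ} {α : ℝ} (hα : 0 < α) {E : Set (Fin n → ℝ)}
    {c : Fin n → ℝ} {H : ℝ} (hH : 0 < H) (hE : E ⊆ Cube n c H) :
    hausdorffContent n α E ≤ ENNReal.ofReal H ^ α := by
  refine ENNReal.le_of_forall_pos_le_add fun ε hε _ => ?_
  set hs : ℕ → ℝ := fun j => if j = 0 then H else ((ε : ℝ) * (1/2) ^ j) ^ (1/α) with hhs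
  have hpos : ∀ j, 0 < hs j := by
    intro j
    by_cases hj : j = 0
    · simp [hhs, hj, hH]
    · have : (0:ℝ) < (ε : ℝ) * (1/2) ^ j := by positivity
      simp only [hhs, hj, if_false]
      positivity
  have hcov : E ⊆ ⋃ j, Cube n ((fun _ => c) j) (hs j) := by
    refine hE.trans ?_
    refine subset_trans ?_ (Set.subset_iUnion _ 0)
    simp [hhs]
  have hle : hausdorffContent n α E ≤ ∑' j, ENNReal.ofReal (hs j) ^ α := by
    exact iInf_le_of_le (fun _ => c) (iInf_le_of_le hs (iInf_le_of_le hpos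
      (iInf_le_of_le hcov le_rfl)))
  refine hle.trans ?_
  have hsum : ∑' j, ENNReal.ofReal (hs j) ^ α
      = ENNReal.ofReal (hs 0) ^ α + ∑' j, ENNReal.ofReal (hs (j+1)) ^ α :=
    tsum_eq_zero_add' ENNReal.summable
  have hterm : ∀ j : ℕ, ENNReal.ofReal (hs (j+1)) ^ α
      = ENNReal.ofReal ((ε : ℝ)) * (2⁻¹ : ℝ≥0∞) ^ (j+1) := by
    intro j
    have hx : (0:ℝ) < (ε : ℝ) * (1/2) ^ (j+1) := by positivity
    have : hs (j+1) = ((ε : ℝ) * (1/2) ^ (j+1)) ^ (1/α) := by simp [hhs]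
    rw [this, ← ENNReal.ofReal_rpow_of_pos hx, ← ENNReal.rpow_mul,
      one_div_mul_cancel hα.ne', ENNReal.rpow_one,
      ENNReal.ofReal_mul (by positivity), ENNReal.ofReal_pow (by norm_num)]
    rw [show ((1:ℝ)/2) = 2⁻¹ by norm_num, ENNReal.ofReal_inv_of_pos two_pos]
    norm_num
  have hgeo : ∑' j : ℕ, (2⁻¹ : ℝ≥0∞) ^ (j+1) = 1 := by
    have : ∑' j : ℕ, (2⁻¹ : ℝ≥0∞) ^ (j+1) = 2⁻¹ * ∑' j : ℕ, (2⁻¹ : ℝ≥0∞) ^ j := by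
      rw [← ENNReal.tsum_mul_left]
      congr 1; ext j; rw [pow_succ, mul_comm]
    rw [this, ENNReal.tsum_geometric, ENNReal.one_sub_inv_two, inv_inv]
    simp [ENNReal.inv_mul_cancel]
  calc ∑' j, ENNReal.ofReal (hs j) ^ α
      = ENNReal.ofReal H ^ α + ∑' j, ENNReal.ofReal (hs (j+1)) ^ α := by
        rw [hsum, show hs 0 = H by simp [hhs]]
    _ = ENNReal.ofReal H ^ α + ENNReal.ofReal ((ε : ℝ)) * 1 := by
        rw [tsum_congr hterm, ENNReal.tsum_mul_left, hgeo]
    _ = ENNReal.ofReal H ^ α + ε := by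
        rw [mul_one, ENNReal.ofReal_coe_nnreal]
    _ ≤ ENNReal.ofReal H ^ α + ε := le_rfl

lemma hausdorffContent_empty {n : ℕ} {α : ℝ} (hα : 0 < α) :
    hausdorffContent n α (∅ : Set (Fin n → ℝ)) = 0 := by
  refine le_antisymm ?_ zero_le
  refine ENNReal.le_of_forall_pos_le_add fun ε hε _ => ?_
  have hH : (0:ℝ) < ((ε : ℝ)) ^ (1/α) := by positivity
  have hle := hausdorffContent_le_cube (n := n) hα (E := (∅ : Set (Fin n → ℝ)))
    (c := fun _ => (0:ℝ)) hH (empty_subset _)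
  refine hle.trans ?_
  rw [← ENNReal.ofReal_rpow_of_pos (by positivity), ← ENNReal.rpow_mul,
    one_div, inv_mul_cancel₀ hα.ne', ENNReal.rpow_one, ENNReal.ofReal_coe_nnreal]
  simp

lemma lintegral_indicator_cube (n : ℕ) (c c' : Fin n → ℝ) (h h' : ℝ) :
    ∫⁻ y in Cube n c' h', ENNReal.ofReal |((Cube n c h).indicator fun _ => (1:ℝ)) y|
      = volume (Cube n c h ∩ Cube n c' h') := by
  have heq : ∀ y, ENNReal.ofReal |((Cube n c h).indicator fun _ => (1:ℝ)) y|
      = (Cube n c h).indicator (fun _ => (1:ℝ≥0∞)) y := by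
    intro y; by_cases hy : y ∈ Cube n c h <;> simp [hy]
  rw [lintegral_congr heq, lintegral_indicator (measurableSet_cube n c h)]
  rw [Measure.restrict_restrict (measurableSet_cube n c h)]
  simp

lemma maximal_indicator_le_one (n : ℕ) (c : Fin n → ℝ) (h : ℝ) (x : Fin n → ℝ) :
    maximalFn n ((Cube n c h).indicator fun _ => (1:ℝ)) x ≤ 1 := by
  refine iSup_le fun c' => iSup_le fun h' => iSup_le fun hh' => iSup_le fun _ => ?_
  rw [lintegral_indicator_cube]
  refine ENNReal.div_le_of_le_mul ?_
  rw [one_mul, ← volume_cube n c' hh'.le]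
  exact measure_mono inter_subset_right

/-- Orobitg–Verdera: for `0 < α < n` and `p > α/n`,
`∫ (M 1_Q)^p dH^α ≤ C l(Q)^α` with `C = C(α,n,p)`. -/
theorem choquet_maximal_indicator (n : ℕ) (α p : ℝ) (hα : 0 < α) (hαn : α < n)
    (hp : α / n < p) :
    ∃ C : ℝ≥0∞, 0 < C ∧ C ≠ ⊤ ∧ ∀ (c : Fin n → ℝ) (h : ℝ), 0 < h →
      choquetE n α
          (fun x => maximalFn n ((Cube n c h).indicator fun _ => (1:ℝ)) x ^ p)
        ≤ C * ENNReal.ofReal h ^ α := by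
  have hn0 : 0 < (n:ℝ) := hα.trans hαn
  have hp0 : 0 < p := lt_trans (by positivity) hp
  set β := α / (p * n) with hβ
  have hβ0 : 0 < β := by positivity
  have hβ1 : β < 1 := by
    rw [hβ, div_lt_one (by positivity)]
    have := (div_lt_iff₀ hn0).1 hp
    linarith
  set I := ∫⁻ t in Set.Ioo (0:ℝ) 1, ENNReal.ofReal t ^ (-β) with hI
  have hIfin : I ≠ ⊤ := by
    have h1 : I = ∫⁻ t in Set.Ioo (0:ℝ) 1, ENNReal.ofReal (t ^ (-β)) := by
      refine setLIntegral_congr_fun measurableSet_Ioo (fun t ht => ?_)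
      exact ENNReal.ofReal_rpow_of_pos ht.1
    rw [h1, ← ofReal_integral_eq_lintegral_ofReal]
    · exact ENNReal.ofReal_ne_top
    · exact (intervalIntegral.integrableOn_Ioo_rpow_iff one_pos).2 (by linarith)
    · exact (ae_restrict_iff' measurableSet_Ioo).2
        (ae_of_all _ fun t ht => Real.rpow_nonneg ht.1.le _)
  have h3fin : ENNReal.ofReal 3 ^ α ≠ ⊤ :=
    (ENNReal.rpow_lt_top_of_nonneg hα.le ENNReal.ofReal_ne_top).ne
  refine ⟨ENNReal.ofReal 3 ^ α * I + 1, ?_, ?_, ?_⟩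
  · exact lt_of_lt_of_le one_pos le_add_self
  · exact ENNReal.add_ne_top.2 ⟨ENNReal.mul_ne_top h3fin hIfin, ENNReal.one_ne_top⟩
  intro c h hh
  set f := (Cube n c h).indicator fun _ => (1:ℝ) with hf
  have key : ∀ t ∈ Set.Ioi (0:ℝ),
      hausdorffContent n α {y | ENNReal.ofReal t < maximalFn n f y ^ p}
        ≤ (Set.Ioo (0:ℝ) 1).indicator
            (fun t => ENNReal.ofReal (3*h) ^ α * ENNReal.ofReal t ^ (-β)) t := by
    intro t ht
    rw [Set.mem_Ioi] at ht
    rcases lt_or_ge t 1 with ht1 | ht1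
    · rw [Set.indicator_of_mem (Set.mem_Ioo.2 ⟨ht, ht1⟩)]
      set u := t ^ (-(1/(p*n))) with hu
      have hu1 : 1 ≤ u := Real.one_le_rpow_of_pos_of_le_one_of_nonpos ht ht1.le
        (by rw [neg_nonpos]; positivity)
      have hu0 : 0 < u := lt_of_lt_of_le one_pos hu1
      have hsub : {y | ENNReal.ofReal t < maximalFn n f y ^ p}
          ⊆ Cube n (fun i => c i - h*u) (h + 2*(h*u)) := by
        intro y hy
        rw [Set.mem_setOf_eq] at hy
        have h1 : ENNReal.ofReal t ^ (1/p) < (maximalFn n f y ^ p) ^ (1/p) :=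
          ENNReal.rpow_lt_rpow hy (by positivity)
        rw [← ENNReal.rpow_mul, mul_one_div, div_self hp0.ne', ENNReal.rpow_one,
          ENNReal.ofReal_rpow_of_pos ht] at h1
        simp only [maximalFn, lt_iSup_iff] at h1
        obtain ⟨c', h', hh', hyR, hlt⟩ := h1
        rw [hf, lintegral_indicator_cube] at hlt
        have hd0 : ENNReal.ofReal (h' ^ n) ≠ 0 :=
          (ENNReal.ofReal_pos.2 (by positivity)).ne'
        have hmul : ENNReal.ofReal (t ^ (1/p)) * ENNReal.ofReal (h' ^ n)
            < volume (Cube n c h ∩ Cube n c' h') :=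
          (ENNReal.lt_div_iff_mul_lt (Or.inl hd0) (Or.inl ENNReal.ofReal_ne_top)).1 hlt
        have hne : (Cube n c h ∩ Cube n c' h').Nonempty := by
          rw [Set.nonempty_iff_ne_empty]
          intro he
          rw [he, measure_empty] at hmul
          exact absurd hmul (by simp)
        obtain ⟨z, hzQ, hzR⟩ := hne
        have hvol : volume (Cube n c h ∩ Cube n c' h') ≤ ENNReal.ofReal (h ^ n) := by
          rw [← volume_cube n c hh.le]
          exact measure_mono Set.inter_subset_left
        have hreal : t ^ (1/p) * h' ^ n < h ^ n := by
          have h5 := hmul.trans_le hvol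
          rw [← ENNReal.ofReal_mul (by positivity)] at h5
          exact (ENNReal.ofReal_lt_ofReal_iff (by positivity)).1 h5
        have hh'u : h' < h * u := by
          have hs0 : (0:ℝ) < t ^ (1/p) := Real.rpow_pos_of_pos ht _
          have h6 : (h * u) ^ n = h ^ n * (t ^ (1/p))⁻¹ := by
            rw [mul_pow, hu]
            congr 1
            rw [← Real.rpow_natCast (t ^ (-(1/(p*n)))) n, ← Real.rpow_mul ht.le,
              ← Real.rpow_neg ht.le]
            congr 1
            field_simp
          have h7 : h' ^ n < (h * u) ^ n := by
            rw [h6, lt_mul_inv_iff₀ hs0, mul_comm]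
            exact hreal
          exact lt_of_pow_lt_pow_left₀ n (by positivity) h7
        intro i
        obtain ⟨hy1, hy2⟩ := hyR i
        obtain ⟨hz1, hz2⟩ := hzQ i
        obtain ⟨hz3, hz4⟩ := hzR i
        refine ⟨?_, ?_⟩
        · show c i - h * u ≤ y i
          linarith
        · show y i ≤ c i - h * u + (h + 2 * (h * u))
          linarith
      calc hausdorffContent n α {y | ENNReal.ofReal t < maximalFn n f y ^ p}
          ≤ ENNReal.ofReal (h + 2*(h*u)) ^ α :=
            hausdorffContent_le_cube hα (by positivity) hsub
        _ ≤ ENNReal.ofReal (3*h*u) ^ α := by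
            refine ENNReal.rpow_le_rpow (ENNReal.ofReal_le_ofReal ?_) hα.le
            nlinarith
        _ = ENNReal.ofReal (3*h) ^ α * ENNReal.ofReal t ^ (-β) := by
            rw [show (3*h*u : ℝ) = (3*h)*u by ring,
              ENNReal.ofReal_mul (by positivity : (0:ℝ) ≤ 3*h),
              ENNReal.mul_rpow_of_nonneg _ _ hα.le, hu,
              ← ENNReal.ofReal_rpow_of_pos ht, ← ENNReal.rpow_mul]
            congr 1
            rw [hβ]
            field_simp
    · have hemp : {y | ENNReal.ofReal t < maximalFn n f y ^ p} = ∅ := by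
        ext y
        simp only [Set.mem_setOf_eq, Set.mem_empty_iff_false, iff_false, not_lt]
        calc maximalFn n f y ^ p ≤ 1 :=
              ENNReal.rpow_le_one (maximal_indicator_le_one n c h y) hp0.le
          _ = ENNReal.ofReal 1 := by simp
          _ ≤ ENNReal.ofReal t := ENNReal.ofReal_le_ofReal ht1
      rw [hemp, hausdorffContent_empty hα]
      exact zero_le
  calc choquetE n α (fun x => maximalFn n f x ^ p)
      ≤ ∫⁻ t in Set.Ioi (0:ℝ), (Set.Ioo (0:ℝ) 1).indicator
          (fun t => ENNReal.ofReal (3*h) ^ α * ENNReal.ofReal t ^ (-β)) t :=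
        setLIntegral_mono' measurableSet_Ioi key
    _ = ∫⁻ t in Set.Ioo (0:ℝ) 1, ENNReal.ofReal (3*h) ^ α * ENNReal.ofReal t ^ (-β) := by
        rw [lintegral_indicator measurableSet_Ioo,
          Measure.restrict_restrict measurableSet_Ioo,
          Set.inter_eq_left.2 (fun x hx => hx.1)]
    _ = ENNReal.ofReal (3*h) ^ α * I := by
        rw [hI, lintegral_const_mul' _ _
          (ENNReal.rpow_lt_top_of_nonneg hα.le ENNReal.ofReal_ne_top).ne]
    _ ≤ (ENNReal.ofReal 3 ^ α * I + 1) * ENNReal.ofReal h ^ α := by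
        rw [ENNReal.ofReal_mul (by norm_num), ENNReal.mul_rpow_of_nonneg _ _ hα.le]
        calc ENNReal.ofReal 3 ^ α * ENNReal.ofReal h ^ α * I
            = (ENNReal.ofReal 3 ^ α * I) * ENNReal.ofReal h ^ α := by ring
          _ ≤ (ENNReal.ofReal 3 ^ α * I + 1) * ENNReal.ofReal h ^ α := by
              exact mul_le_mul_left le_self_add _
end
end
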